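/- Let Φ : A → A be a unital Schwarz map and ρ an invertible density operator with Φ*(ρ) = ρ. Then the fixed point set F_Φ = {a ∈ A : Φ(a) = a} is a C*-subalgebra of A, and every a ∈ F_Φ lies in the multiplicative domain of Φ, i.e., Φ(a*a) = Φ(a)*Φ(a) and Φ(aa*) = Φ(a)Φ(a)*. -/

import Mathlib

open Matrix ComplexOrder

section sqrtPort
open scoped MatrixOrder

noncomputable def Matrix.PosSemidef.sqrt {n : Type*} [Fintype n] [DecidableEq n]
    {A : Matrix n n ℂ} (_hA : A.PosSemidef) : Matrix n n ℂ := CFC.sqrt A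

lemma Matrix.PosSemidef.posSemidef_sqrt {n : Type*} [Fintype n] [DecidableEq n]
    {A : Matrix n n ℂ} (hA : A.PosSemidef) : hA.sqrt.PosSemidef :=
  Matrix.nonneg_iff_posSemidef.mp (CFC.sqrt_nonneg A)

lemma Matrix.PosSemidef.sqrt_mul_self {n : Type*} [Fintype n] [DecidableEq n]
    {A : Matrix n n ℂ} (hA : A.PosSemidef) : hA.sqrt * hA.sqrt = A :=
  CFC.sqrt_mul_sqrt_self A (Matrix.nonneg_iff_posSemidef.mpr hA)

end sqrtPort

private lemma aux_trace_zero {n : Type*} [Fintype n] [DecidableEq n]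
    {B : Matrix n n ℂ} (h : (Bᴴ * B).trace = 0) : B = 0 := by
  have h2 : (↑(∑ j, ∑ i, Complex.normSq (B i j)) : ℂ) = 0 := by
    rw [← h]
    push_cast
    simp [Matrix.trace, Matrix.diag, Matrix.mul_apply, Matrix.conjTranspose_apply,
      Complex.normSq_eq_conj_mul_self]
  have h3 : ∑ j, ∑ i, Complex.normSq (B i j) = 0 := by exact_mod_cast h2
  ext i j
  have := (Finset.sum_eq_zero_iff_of_nonneg (fun j _ => Finset.sum_nonneg
    (fun i _ => Complex.normSq_nonneg _))).mp h3 j (Finset.mem_univ j)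
  have := (Finset.sum_eq_zero_iff_of_nonneg (fun i _ => Complex.normSq_nonneg _)).mp
    this i (Finset.mem_univ i)
  simpa using Complex.normSq_eq_zero.mp this

private lemma aux_psd_zero {n : Type*} [Fintype n] [DecidableEq n]
    {M ρ : Matrix n n ℂ} (hM : M.PosSemidef) (hρ : ρ.PosDef)
    (h : (ρ * M).trace = 0) : M = 0 := by
  set r := hρ.posSemidef.sqrt with hrdef
  set s := hM.sqrt with hsdef
  have hrr : r * r = ρ := hρ.posSemidef.sqrt_mul_self
  have hss : s * s = M := hM.sqrt_mul_self
  have hrH : rᴴ = r := hρ.posSemidef.posSemidef_sqrt.isHermitian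
  have hsH : sᴴ = s := hM.posSemidef_sqrt.isHermitian
  have key : ((s * r)ᴴ * (s * r)).trace = 0 := by
    have e : (s * r)ᴴ * (s * r) = r * (s * s * r) := by
      rw [conjTranspose_mul, hrH, hsH]; noncomm_ring
    rw [e, trace_mul_comm, mul_assoc, hss, hrr, trace_mul_comm, h]
  have hsr : s * r = 0 := aux_trace_zero key
  have hMr : M * r = 0 := by
    rw [← hss, mul_assoc, hsr, mul_zero]
  have hdet : IsUnit r.det := by
    have : ρ.det = r.det * r.det := by rw [← hrr, det_mul]
    have hρd : ρ.det ≠ 0 := hρ.det_pos.ne'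
    rw [this] at hρd
    exact (mul_ne_zero_iff.mp hρd).1.isUnit
  calc M = M * r * r⁻¹ := by rw [mul_assoc, mul_nonsing_inv _ hdet, mul_one]
    _ = 0 := by rw [hMr, zero_mul]

private lemma aux_herm_decomp {n : Type*} [Fintype n] [DecidableEq n]
    {h : Matrix n n ℂ} (hh : h.IsHermitian) :
    ∃ p q : Matrix n n ℂ, p.PosSemidef ∧ q.PosSemidef ∧ h = p - q := by
  set U : Matrix n n ℂ := (hh.eigenvectorUnitary : Matrix n n ℂ)
  refine ⟨U * diagonal (fun i => ((max (hh.eigenvalues i) 0 : ℝ) : ℂ)) * Uᴴ,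
    U * diagonal (fun i => ((max (-hh.eigenvalues i) 0 : ℝ) : ℂ)) * Uᴴ, ?_, ?_, ?_⟩
  · exact (Matrix.PosSemidef.diagonal (fun i => Complex.zero_le_real.mpr (le_max_right _ _))).mul_mul_conjTranspose_same U
  · exact (Matrix.PosSemidef.diagonal (fun i => Complex.zero_le_real.mpr (le_max_right _ _))).mul_mul_conjTranspose_same U
  · rw [← Matrix.sub_mul, ← Matrix.mul_sub, Matrix.diagonal_sub]
    have e2 : (fun i => (((max (hh.eigenvalues i) 0 : ℝ) : ℂ) - ((max (-hh.eigenvalues i) 0 : ℝ) : ℂ))) = fun i => ((hh.eigenvalues i : ℝ) : ℂ) := by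
      funext i
      rw [← Complex.ofReal_sub]
      congr 1
      rcases le_total (hh.eigenvalues i) 0 with h0 | h0
      · rw [max_eq_right h0, max_eq_left (by linarith)]; ring
      · rw [max_eq_left h0, max_eq_right (by linarith)]; ring
    rw [e2]
    nth_rewrite 1 [hh.spectral_theorem]
    rfl


/-- Let `Φ` be a unital Schwarz map on a matrix algebra and `ρ` an
invertible density operator with `Φ* ρ = ρ` (i.e. `Tr(ρ Φ(a)) = Tr(ρ a)` for all
`a`). Then the fixed-point set of `Φ` is a C*-subalgebra (closed under
multiplication and adjoints; it contains `1` and is a linear subspace since `Φ`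
is unital and linear), and every fixed point lies in the multiplicative domain
of `Φ`. -/
theorem stmt10 {n : Type*} [Fintype n] [DecidableEq n]
    (Φ : Matrix n n ℂ →ₗ[ℂ] Matrix n n ℂ)
    (hunital : Φ 1 = 1)
    (hschwarz : ∀ a : Matrix n n ℂ, (Φ (aᴴ * a) - (Φ a)ᴴ * Φ a).PosSemidef)
    (ρ : Matrix n n ℂ) (hρ : ρ.PosDef) (hρ1 : ρ.trace = 1)
    (hinv : ∀ a : Matrix n n ℂ, (ρ * Φ a).trace = (ρ * a).trace) :
    (∀ a b : Matrix n n ℂ, Φ a = a → Φ b = b → Φ (a * b) = a * b) ∧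
    (∀ a : Matrix n n ℂ, Φ a = a → Φ aᴴ = aᴴ) ∧
    (∀ a : Matrix n n ℂ, Φ a = a →
      Φ (aᴴ * a) = (Φ a)ᴴ * Φ a ∧ Φ (a * aᴴ) = Φ a * (Φ a)ᴴ) := by
  -- Φ maps PSD matrices to PSD matrices
  have hpos : ∀ b : Matrix n n ℂ, b.PosSemidef → (Φ b).PosSemidef := by
    intro b hb
    have hsb : hb.sqrtᴴ * hb.sqrt = b := by
      rw [hb.posSemidef_sqrt.isHermitian, hb.sqrt_mul_self]
    have := (hschwarz hb.sqrt).add (posSemidef_conjTranspose_mul_self (Φ hb.sqrt))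
    rwa [sub_add_cancel, hsb] at this
  -- Φ preserves hermitian matrices
  have hherm : ∀ h : Matrix n n ℂ, h.IsHermitian → (Φ h).IsHermitian := by
    intro h hh
    obtain ⟨p, q, hp, hq, rfl⟩ := aux_herm_decomp hh
    rw [map_sub]
    exact ((hpos p hp).isHermitian).sub ((hpos q hq).isHermitian)
  -- Φ is star-preserving
  have hstar : ∀ x : Matrix n n ℂ, Φ xᴴ = (Φ x)ᴴ := by
    intro x
    have hc : Complex.I * (-(Complex.I)/2) = 2⁻¹ := by
      linear_combination (-(1:ℂ)/2) * Complex.I_sq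
    obtain ⟨H, K, hH, hK, ex, ex'⟩ : ∃ H K : Matrix n n ℂ, H.IsHermitian ∧ K.IsHermitian ∧
        x = H + Complex.I • K ∧ xᴴ = H - Complex.I • K := by
      refine ⟨(2⁻¹ : ℂ) • (x + xᴴ), (-(Complex.I)/2) • (x - xᴴ), ?_, ?_, ?_, ?_⟩
      · rw [IsHermitian, conjTranspose_smul, conjTranspose_add, conjTranspose_conjTranspose]
        simp [add_comm]
      · rw [IsHermitian, conjTranspose_smul, conjTranspose_sub, conjTranspose_conjTranspose]
        simp only [Complex.star_def, map_div₀, Complex.conj_I, map_neg, Complex.conj_ofNat]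
        module
      · rw [smul_smul, hc]; module
      · rw [smul_smul, hc]; module
    rw [ex', map_sub, LinearMap.map_smul, ex, map_add, LinearMap.map_smul,
      conjTranspose_add, conjTranspose_smul, (hherm H hH).eq, (hherm K hK).eq,
      Complex.star_def, Complex.conj_I, neg_smul, ← sub_eq_add_neg]
  -- fixed points satisfy Φ(aᴴa) = aᴴa
  have hmul : ∀ a : Matrix n n ℂ, Φ a = a → Φ (aᴴ * a) = aᴴ * a := by
    intro a ha
    have hps := hschwarz a
    rw [ha] at hps
    have htr : (ρ * (Φ (aᴴ * a) - aᴴ * a)).trace = 0 := by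
      rw [mul_sub, trace_sub, hinv, sub_self]
    have := aux_psd_zero hps hρ htr
    exact sub_eq_zero.mp this
  have hfixstar : ∀ a : Matrix n n ℂ, Φ a = a → Φ aᴴ = aᴴ := by
    intro a ha
    rw [hstar, ha]
  refine ⟨?_, hfixstar, ?_⟩
  · -- product of fixed points
    intro a b ha hb
    have hfix : ∀ μ : ℂ, Φ (aᴴ + μ • b) = aᴴ + μ • b := by
      intro μ
      rw [map_add, Φ.map_smul, hfixstar a ha, hb]
    have h1 := hmul _ (hfix 1)
    have h2 := hmul _ (hfix (-1))
    have h3 := hmul _ (hfix Complex.I)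
    have h4 := hmul _ (hfix (-Complex.I))
    simp only [one_smul, neg_smul, ← sub_eq_add_neg] at h1 h2 h3 h4
    have key : a * b = (4⁻¹ : ℂ) • ((aᴴ + b)ᴴ * (aᴴ + b)) - (4⁻¹ : ℂ) • ((aᴴ - b)ᴴ * (aᴴ - b))
        - (Complex.I/4) • ((aᴴ + Complex.I • b)ᴴ * (aᴴ + Complex.I • b))
        + (Complex.I/4) • ((aᴴ - Complex.I • b)ᴴ * (aᴴ - Complex.I • b)) := by
      simp only [conjTranspose_add, conjTranspose_sub, conjTranspose_smul,
        conjTranspose_conjTranspose, Complex.star_def, Complex.conj_I,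
        add_mul, mul_add, sub_mul, mul_sub, smul_add, smul_sub, smul_smul,
        smul_mul_assoc, mul_smul_comm, neg_smul, neg_mul, smul_neg, neg_neg]
      match_scalars <;> (try ring_nf) <;> (try simp only [Complex.I_sq]) <;> (try norm_num) <;> (try ring_nf)
    calc Φ (a * b) = (4⁻¹ : ℂ) • Φ ((aᴴ + b)ᴴ * (aᴴ + b)) - (4⁻¹ : ℂ) • Φ ((aᴴ - b)ᴴ * (aᴴ - b))
        - (Complex.I/4) • Φ ((aᴴ + Complex.I • b)ᴴ * (aᴴ + Complex.I • b))
        + (Complex.I/4) • Φ ((aᴴ - Complex.I • b)ᴴ * (aᴴ - Complex.I • b)) := by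
          rw [key]; simp only [map_add, map_sub, LinearMap.map_smul]
      _ = a * b := by rw [h1, h2, h3, h4, ← key]
  · intro a ha
    refine ⟨?_, ?_⟩
    · rw [ha, hmul a ha]
    · rw [ha]
      have := hmul aᴴ (hfixstar a ha)
      rwa [conjTranspose_conjTranspose] at this
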